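/- Let γ : ℝ → ℝ³ be a non-degenerate C² curve on S² and let f_z (for z ∈ ℝ³) be the associated projection maps. There is a constant C(γ), depending only on γ, such that for every δ > 0 and all z, z' ∈ ℝ³ with |z| ≤ 1/2, |z'| ≤ 1/2 and z ≠ z', one has L³( f_z^δ([0,1]) ∩ f_{z'}^δ([0,1]) ) ≤ C(γ) · δ³ / |z − z'|, where f^δ([0,1]) := {(θ, y) ∈ [0,1] × ℝ² : |y − f(θ)| < δ} and L³ is Lebesgue measure on ℝ³. -/

import Mathlib

open MeasureTheory Set
open scoped ENNReal NNReal

/-- The cross product on `ℝ³ = EuclideanSpace ℝ (Fin 3)`. -/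
noncomputable def cross3 (a b : EuclideanSpace ℝ (Fin 3)) : EuclideanSpace ℝ (Fin 3) :=
  (EuclideanSpace.equiv (Fin 3) ℝ).symm
    ![a 1 * b 2 - a 2 * b 1, a 2 * b 0 - a 0 * b 2, a 0 * b 1 - a 1 * b 0]

/-- For a curve `γ` on `S²`, normalisation constant `M`, and `z ∈ ℝ³`, the projection map
`f_z(θ) = (⟨z, γ'(θ)/M⟩, ⟨z, ν(θ)⟩)` where `ν(θ) = γ(θ) × γ'(θ)/|γ'(θ)|`. -/
noncomputable def fmap (γ : ℝ → EuclideanSpace ℝ (Fin 3)) (M : ℝ)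
    (z : EuclideanSpace ℝ (Fin 3)) (θ : ℝ) : EuclideanSpace ℝ (Fin 2) :=
  (EuclideanSpace.equiv (Fin 2) ℝ).symm
    ![(inner ℝ z (M⁻¹ • deriv γ θ) : ℝ),
      (inner ℝ z ((‖deriv γ θ‖)⁻¹ • cross3 (γ θ) (deriv γ θ)) : ℝ)]

/-- The vertical `δ`-neighbourhood of the graph of `f : ℝ → ℝ²` over `[0,1]`. -/
def vertNbhd1 (f : ℝ → EuclideanSpace ℝ (Fin 2)) (δ : ℝ) :
    Set (ℝ × EuclideanSpace ℝ (Fin 2)) :=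
  {p | p.1 ∈ Icc (0:ℝ) 1 ∧ ‖p.2 - f p.1‖ < δ}



open scoped RealInnerProductSpace

local notation "E3" => EuclideanSpace ℝ (Fin 3)
local notation "E2" => EuclideanSpace ℝ (Fin 2)

lemma cross3_0 (a b : E3) : cross3 a b 0 = a 1 * b 2 - a 2 * b 1 := rfl
lemma cross3_1 (a b : E3) : cross3 a b 1 = a 2 * b 0 - a 0 * b 2 := rfl
lemma cross3_2 (a b : E3) : cross3 a b 2 = a 0 * b 1 - a 1 * b 0 := rfl

lemma inner3 (x y : E3) : ⟪x, y⟫ = x 0 * y 0 + x 1 * y 1 + x 2 * y 2 := by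
  simp [PiLp.inner_apply, Fin.sum_univ_three]; ring

lemma inner_cross_left (a b : E3) : ⟪cross3 a b, a⟫ = 0 := by
  rw [inner3, cross3_0, cross3_1, cross3_2]; ring

lemma inner_cross_right (a b : E3) : ⟪cross3 a b, b⟫ = 0 := by
  rw [inner3, cross3_0, cross3_1, cross3_2]; ring

lemma cross3_cross3 (a b c : E3) :
    cross3 a (cross3 b c) = ⟪a, c⟫ • b - ⟪a, b⟫ • c := by
  apply PiLp.ext
  intro i
  have h : ∀ j : Fin 3, (⟪a, c⟫ • b - ⟪a, b⟫ • c) j = ⟪a,c⟫ * b j - ⟪a,b⟫ * c j := fun j => rfl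
  fin_cases i
  · rw [show (⟨0, by norm_num⟩ : Fin 3) = 0 from rfl, cross3_0, cross3_1, cross3_2, h,
      inner3, inner3]; ring
  · rw [show (⟨1, by norm_num⟩ : Fin 3) = 1 from rfl, cross3_1, cross3_0, cross3_2, h,
      inner3, inner3]; ring
  · rw [show (⟨2, by norm_num⟩ : Fin 3) = 2 from rfl, cross3_2, cross3_0, cross3_1, h,
      inner3, inner3]; ring

lemma cross3_antisymm (a b : E3) : cross3 a b = - cross3 b a := by
  apply PiLp.ext
  intro i
  have h : ∀ j : Fin 3, (- cross3 b a) j = - (cross3 b a j) := fun j => rfl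
  fin_cases i
  · rw [show (⟨0, by norm_num⟩ : Fin 3) = 0 from rfl, cross3_0, h, cross3_0]; ring
  · rw [show (⟨1, by norm_num⟩ : Fin 3) = 1 from rfl, cross3_1, h, cross3_1]; ring
  · rw [show (⟨2, by norm_num⟩ : Fin 3) = 2 from rfl, cross3_2, h, cross3_2]; ring

lemma cross3_zero_right (x : E3) : cross3 x 0 = 0 := by
  apply PiLp.ext
  intro i
  fin_cases i
  · rw [show (⟨0, by norm_num⟩ : Fin 3) = 0 from rfl, cross3_0]; simp
  · rw [show (⟨1, by norm_num⟩ : Fin 3) = 1 from rfl, cross3_1]; simp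
  · rw [show (⟨2, by norm_num⟩ : Fin 3) = 2 from rfl, cross3_2]; simp

lemma eq_smul_of_inner_eq_zero {a b v : E3} (ha : ⟪v, a⟫ = 0) (hb : ⟪v, b⟫ = 0) :
    ⟪cross3 a b, cross3 a b⟫ • v = ⟪cross3 a b, v⟫ • cross3 a b := by
  have h1 : cross3 v (cross3 a b) = 0 := by
    rw [cross3_cross3, ha, hb]; simp
  have h3 : cross3 (cross3 a b) v = 0 := by
    rw [cross3_antisymm, h1]; simp
  have h2 := cross3_cross3 (cross3 a b) (cross3 a b) v
  rw [h3, cross3_zero_right] at h2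
  have := h2.symm
  rw [sub_eq_zero] at this
  simpa using this.symm

section curve
variable {γ : ℝ → E3}

lemma hasDerivAt_γ (hγ : ContDiff ℝ 2 γ) (θ : ℝ) : HasDerivAt γ (deriv γ θ) θ :=
  ((hγ.differentiable (by norm_num)) θ).hasDerivAt

lemma contDiff_deriv_γ (hγ : ContDiff ℝ 2 γ) : ContDiff ℝ 1 (deriv γ) := by
  have : (2 : WithTop ℕ∞) = 1 + 1 := by norm_num
  rw [this, contDiff_succ_iff_deriv] at hγ
  exact hγ.2.2

lemma hasDerivAt_deriv_γ (hγ : ContDiff ℝ 2 γ) (θ : ℝ) : HasDerivAt (deriv γ) (deriv (deriv γ) θ) θ :=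
  (((contDiff_deriv_γ hγ).differentiable (by norm_num)) θ).hasDerivAt

lemma continuous_dd_γ (hγ : ContDiff ℝ 2 γ) : Continuous (deriv (deriv γ)) :=
  (contDiff_deriv_γ hγ).continuous_deriv le_rfl

lemma orth1 (hγ : ContDiff ℝ 2 γ) (hsphere : ∀ θ ∈ Icc (0:ℝ) 1, ‖γ θ‖ = 1) :
    ∀ θ ∈ Icc (0:ℝ) 1, ⟪γ θ, deriv γ θ⟫ = 0 := by
  have hcont : Continuous fun θ => ⟪γ θ, deriv γ θ⟫ :=
    hγ.continuous.inner (hγ.continuous_deriv (by norm_num))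
  have key : EqOn (fun θ => ⟪γ θ, deriv γ θ⟫) 0 (Ioo (0:ℝ) 1) := by
    intro θ hθ
    have hq : HasDerivAt (fun t => ⟪γ t, γ t⟫)
        (⟪γ θ, deriv γ θ⟫ + ⟪deriv γ θ, γ θ⟫) θ :=
      (hasDerivAt_γ hγ θ).inner ℝ (hasDerivAt_γ hγ θ)
    have heq : (fun t => ⟪γ t, γ t⟫) =ᶠ[nhds θ] fun _ => (1 : ℝ) := by
      filter_upwards [Ioo_mem_nhds hθ.1 hθ.2] with t ht
      have := hsphere t (Ioo_subset_Icc_self ht)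
      rw [real_inner_self_eq_norm_sq, this]; norm_num
    have hd : deriv (fun t => ⟪γ t, γ t⟫) θ = 0 := by
      rw [heq.deriv_eq]; simp
    have hder := hq.deriv
    rw [hd] at hder
    have hcomm : ⟪deriv γ θ, γ θ⟫ = ⟪γ θ, deriv γ θ⟫ := real_inner_comm _ _
    show ⟪γ θ, deriv γ θ⟫ = 0
    linarith
  have := key.closure hcont continuous_const
  rw [closure_Ioo (by norm_num : (0:ℝ) ≠ 1)] at this
  intro θ hθ; exact this hθ

lemma orth2 (hγ : ContDiff ℝ 2 γ) (hsphere : ∀ θ ∈ Icc (0:ℝ) 1, ‖γ θ‖ = 1) :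
    ∀ θ ∈ Icc (0:ℝ) 1, ⟪γ θ, deriv (deriv γ) θ⟫ = -‖deriv γ θ‖^2 := by
  have hcont1 : Continuous fun θ => ⟪γ θ, deriv (deriv γ) θ⟫ :=
    hγ.continuous.inner (continuous_dd_γ hγ)
  have hcont2 : Continuous fun θ => -‖deriv γ θ‖^2 :=
    ((hγ.continuous_deriv (by norm_num)).norm.pow 2).neg
  have key : EqOn (fun θ => ⟪γ θ, deriv (deriv γ) θ⟫) (fun θ => -‖deriv γ θ‖^2)
      (Ioo (0:ℝ) 1) := by
    intro θ hθ
    have hq : HasDerivAt (fun t => ⟪γ t, deriv γ t⟫)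
        (⟪γ θ, deriv (deriv γ) θ⟫ + ⟪deriv γ θ, deriv γ θ⟫) θ :=
      (hasDerivAt_γ hγ θ).inner ℝ (hasDerivAt_deriv_γ hγ θ)
    have heq : (fun t => ⟪γ t, deriv γ t⟫) =ᶠ[nhds θ] fun _ => (0 : ℝ) := by
      filter_upwards [Ioo_mem_nhds hθ.1 hθ.2] with t ht
      exact orth1 hγ hsphere t (Ioo_subset_Icc_self ht)
    have hd : deriv (fun t => ⟪γ t, deriv γ t⟫) θ = 0 := by
      rw [heq.deriv_eq]; simp
    have hder := hq.deriv
    rw [hd, real_inner_self_eq_norm_sq] at hder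
    show ⟪γ θ, deriv (deriv γ) θ⟫ = -‖deriv γ θ‖^2
    linarith
  have := key.closure hcont1 hcont2
  rw [closure_Ioo (by norm_num : (0:ℝ) ≠ 1)] at this
  intro θ hθ; exact this hθ

end curve

lemma continuous_cross3 : Continuous (fun p : E3 × E3 => cross3 p.1 p.2) := by
  apply Continuous.comp (EuclideanSpace.equiv (Fin 3) ℝ).symm.continuous
  apply continuous_pi
  intro i
  have h0 : ∀ j : Fin 3, Continuous (fun p : E3 × E3 => p.1 j) :=
    fun j => (EuclideanSpace.proj j).continuous.comp continuous_fst
  have h1 : ∀ j : Fin 3, Continuous (fun p : E3 × E3 => p.2 j) :=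
    fun j => (EuclideanSpace.proj j).continuous.comp continuous_snd
  fin_cases i
  · exact ((h0 1).mul (h1 2)).sub ((h0 2).mul (h1 1))
  · exact ((h0 2).mul (h1 0)).sub ((h0 0).mul (h1 2))
  · exact ((h0 0).mul (h1 1)).sub ((h0 1).mul (h1 0))

lemma deriv_ne_zero {γ : ℝ → E3}
    (hnondeg : ∀ θ ∈ Icc (0:ℝ) 1, LinearIndependent ℝ ![γ θ, deriv γ θ, deriv (deriv γ) θ])
    {θ : ℝ} (hθ : θ ∈ Icc (0:ℝ) 1) : deriv γ θ ≠ 0 := by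
  have := (hnondeg θ hθ).ne_zero 1
  simpa using this

set_option maxHeartbeats 1000000 in
lemma exists_c {γ : ℝ → E3} (hγ : ContDiff ℝ 2 γ)
    (hsphere : ∀ θ ∈ Icc (0:ℝ) 1, ‖γ θ‖ = 1)
    (hnondeg : ∀ θ ∈ Icc (0:ℝ) 1, LinearIndependent ℝ ![γ θ, deriv γ θ, deriv (deriv γ) θ]) :
    ∃ c : ℝ, 0 < c ∧ ∀ u : E3, ‖u‖ = 1 → ∀ θ ∈ Icc (0:ℝ) 1,
      c ≤ |⟪u, deriv γ θ⟫| + |⟪u, cross3 (γ θ) (deriv γ θ)⟫| + |⟪u, deriv (deriv γ) θ⟫| := by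
  set φ : E3 × ℝ → ℝ := fun p =>
    |⟪p.1, deriv γ p.2⟫| + |⟪p.1, cross3 (γ p.2) (deriv γ p.2)⟫| +
      |⟪p.1, deriv (deriv γ) p.2⟫| with hφ
  have hγc : Continuous γ := hγ.continuous
  have hγ'c : Continuous (deriv γ) := hγ.continuous_deriv (by norm_num)
  have hφc : Continuous φ := by
    apply Continuous.add
    apply Continuous.add
    · exact (continuous_fst.inner (hγ'c.comp continuous_snd)).abs
    · exact (continuous_fst.inner (continuous_cross3.comp
        (((hγc.comp continuous_snd).prodMk (hγ'c.comp continuous_snd))))).abs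
    · exact (continuous_fst.inner ((continuous_dd_γ hγ).comp continuous_snd)).abs
  have hK : IsCompact ((Metric.sphere (0:E3) 1) ×ˢ (Icc (0:ℝ) 1)) :=
    (isCompact_sphere _ _).prod isCompact_Icc
  have hne : ((Metric.sphere (0:E3) 1) ×ˢ (Icc (0:ℝ) 1)).Nonempty := by
    refine ⟨(EuclideanSpace.single 0 (1:ℝ), 0), ?_, by norm_num⟩
    simp [mem_sphere_zero_iff_norm, EuclideanSpace.norm_single]
  obtain ⟨p0, hp0K, hmin⟩ := hK.exists_isMinOn hne hφc.continuousOn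
  refine ⟨φ p0, ?_, fun u hu θ hθ => hmin (show (u, θ) ∈ _ from
    ⟨mem_sphere_zero_iff_norm.2 hu, hθ⟩)⟩
  -- positivity
  obtain ⟨u0, θ0⟩ := p0
  have hu0 : ‖u0‖ = 1 := mem_sphere_zero_iff_norm.1 hp0K.1
  have hθ0 : θ0 ∈ Icc (0:ℝ) 1 := hp0K.2
  by_contra hc
  push_neg at hc
  have h1 : |⟪u0, deriv γ θ0⟫| = 0 ∧ |⟪u0, cross3 (γ θ0) (deriv γ θ0)⟫| = 0 ∧
      |⟪u0, deriv (deriv γ) θ0⟫| = 0 := by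
    have a1 := abs_nonneg (⟪u0, deriv γ θ0⟫)
    have a2 := abs_nonneg (⟪u0, cross3 (γ θ0) (deriv γ θ0)⟫)
    have a3 := abs_nonneg (⟪u0, deriv (deriv γ) θ0⟫)
    simp only [hφ] at hc
    constructor; · linarith
    constructor <;> linarith
  obtain ⟨e1, e2, e3⟩ := h1
  rw [abs_eq_zero] at e1 e2 e3
  -- derive u0 parallel to γ θ0
  have hg' : deriv γ θ0 ≠ 0 := deriv_ne_zero hnondeg hθ0
  have hng' : (0:ℝ) < ‖deriv γ θ0‖ := norm_pos_iff.2 hg'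
  have ho1 := orth1 hγ hsphere θ0 hθ0
  have hw : cross3 (deriv γ θ0) (cross3 (γ θ0) (deriv γ θ0)) = ‖deriv γ θ0‖^2 • γ θ0 := by
    rw [cross3_cross3, real_inner_self_eq_norm_sq, real_inner_comm, ho1]
    simp
  have key := eq_smul_of_inner_eq_zero (a := deriv γ θ0) (b := cross3 (γ θ0) (deriv γ θ0))
    (v := u0) e1 e2
  rw [hw] at key
  have hγn : ‖γ θ0‖ = 1 := hsphere θ0 hθ0
  have hip : ⟪γ θ0, γ θ0⟫ = 1 := by
    rw [real_inner_self_eq_norm_sq, hγn]; norm_num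
  rw [real_inner_smul_left, real_inner_smul_right, real_inner_smul_left, hip] at key
  have hpow : (0:ℝ) < ‖deriv γ θ0‖^2 := by positivity
  have key2 : u0 = (⟪γ θ0, u0⟫) • γ θ0 := by
    have h4 : (‖deriv γ θ0‖^2 * (‖deriv γ θ0‖^2 * 1)) • u0
        = (‖deriv γ θ0‖^2 * ⟪γ θ0, u0⟫) • (‖deriv γ θ0‖^2 • γ θ0) := key
    rw [smul_smul] at h4
    have h5 : (‖deriv γ θ0‖^2 * ‖deriv γ θ0‖^2) • u0
        = (‖deriv γ θ0‖^2 * ‖deriv γ θ0‖^2) • ((⟪γ θ0, u0⟫) • γ θ0) := by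
      rw [smul_smul]
      convert h4 using 2 <;> ring
    exact smul_right_injective _ (by positivity) h5
  -- contradiction with e3
  have ho2 := orth2 hγ hsphere θ0 hθ0
  rw [key2, real_inner_smul_left, ho2] at e3
  have habs : |⟪γ θ0, u0⟫| = 1 := by
    have := congrArg norm key2
    rw [norm_smul, hγn, hu0] at this
    simpa using this.symm
  have : ⟪γ θ0, u0⟫ ≠ 0 := by
    intro h; rw [h] at habs; simp at habs
  apply this
  have := mul_eq_zero.1 e3
  rcases this with h | h
  · exact h
  · exact absurd (neg_eq_zero.mp h) (by positivity)

lemma fmap_zero (γ : ℝ → E3) (M : ℝ) (z : E3) (θ : ℝ) :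
    fmap γ M z θ 0 = M⁻¹ * ⟪z, deriv γ θ⟫ := by
  show (inner ℝ z (M⁻¹ • deriv γ θ) : ℝ) = _
  rw [real_inner_smul_right]

lemma fmap_one (γ : ℝ → E3) (M : ℝ) (z : E3) (θ : ℝ) :
    fmap γ M z θ 1 = (‖deriv γ θ‖)⁻¹ * ⟪z, cross3 (γ θ) (deriv γ θ)⟫ := by
  show (inner ℝ z ((‖deriv γ θ‖)⁻¹ • cross3 (γ θ) (deriv γ θ)) : ℝ) = _
  rw [real_inner_smul_right]

lemma abs_apply_le_norm {n : ℕ} (x : EuclideanSpace ℝ (Fin n)) (i : Fin n) :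
    |x i| ≤ ‖x‖ := by
  rw [EuclideanSpace.norm_eq]
  rw [show |x i| = Real.sqrt (‖x i‖^2) by
    rw [Real.sqrt_sq_eq_abs, Real.norm_eq_abs, abs_abs]]
  exact Real.sqrt_le_sqrt (Finset.single_le_sum (f := fun j => ‖x j‖^2)
    (fun j _ => sq_nonneg _) (Finset.mem_univ i))

lemma fmap_sub (γ : ℝ → E3) (M : ℝ) (z z' : E3) (θ : ℝ) :
    fmap γ M z θ - fmap γ M z' θ = fmap γ M (z - z') θ := by
  apply PiLp.ext
  intro i
  have h : ∀ j : Fin 2, (fmap γ M z θ - fmap γ M z' θ) j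
      = fmap γ M z θ j - fmap γ M z' θ j := fun _ => rfl
  fin_cases i
  · rw [show (⟨0, by norm_num⟩ : Fin 2) = 0 from rfl, h, fmap_zero, fmap_zero, fmap_zero,
      inner_sub_left]
    ring
  · rw [show (⟨1, by norm_num⟩ : Fin 2) = 1 from rfl, h, fmap_one, fmap_one, fmap_one,
      inner_sub_left]
    ring

lemma fmap_smul (γ : ℝ → E3) (M : ℝ) (c : ℝ) (z : E3) (θ : ℝ) :
    fmap γ M (c • z) θ = c • fmap γ M z θ := by
  apply PiLp.ext
  intro i
  have h : ∀ j : Fin 2, (c • fmap γ M z θ) j = c * fmap γ M z θ j := fun _ => rfl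
  fin_cases i
  · rw [show (⟨0, by norm_num⟩ : Fin 2) = 0 from rfl, h, fmap_zero, fmap_zero,
      real_inner_smul_left]
    ring
  · rw [show (⟨1, by norm_num⟩ : Fin 2) = 1 from rfl, h, fmap_one, fmap_one,
      real_inner_smul_left]
    ring

lemma fmap_measurable (γ : ℝ → E3) (hγc : Continuous γ) (hγ'c : Continuous (deriv γ))
    (M : ℝ) (z : E3) : Measurable (fmap γ M z) := by
  apply Measurable.comp (EuclideanSpace.equiv (Fin 2) ℝ).symm.continuous.measurable
  apply measurable_pi_lambda
  intro i
  fin_cases i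
  · show Measurable fun θ => (inner ℝ z (M⁻¹ • deriv γ θ) : ℝ)
    exact (Continuous.inner continuous_const (hγ'c.const_smul M⁻¹)).measurable
  · show Measurable fun θ => (inner ℝ z ((‖deriv γ θ‖)⁻¹ • cross3 (γ θ) (deriv γ θ)) : ℝ)
    have h1 : Measurable fun θ => (‖deriv γ θ‖)⁻¹ := hγ'c.norm.measurable.inv
    have h2 : Measurable fun θ => (inner ℝ z (cross3 (γ θ) (deriv γ θ)) : ℝ) :=
      (Continuous.inner continuous_const
        (continuous_cross3.comp (hγc.prodMk hγ'c))).measurable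
    have h3 : (fun θ => (inner ℝ z ((‖deriv γ θ‖)⁻¹ • cross3 (γ θ) (deriv γ θ)) : ℝ))
        = fun θ => (‖deriv γ θ‖)⁻¹ * (inner ℝ z (cross3 (γ θ) (deriv γ θ)) : ℝ) := by
      funext θ; rw [real_inner_smul_right]
    rw [h3]
    exact h1.mul h2

/-- Quantitative mean value bound on an interval. -/
lemma interval_bound {G : ℝ → ℝ} {G' : ℝ → ℝ} (hG : ∀ θ, HasDerivAt G (G' θ) θ)
    {a b c4 : ℝ} (hc4 : 0 < c4) (hlow : ∀ θ ∈ Icc a b, c4 ≤ G' θ)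
    {θ0 θ : ℝ} (hθ0 : θ0 ∈ Icc a b) (hθ : θ ∈ Icc a b) {K : ℝ}
    (h1 : |G θ| ≤ K) (h0 : |G θ0| ≤ K) : |θ - θ0| ≤ 2 * K / c4 := by
  have hcont : ContinuousOn G (Icc a b) :=
    Continuous.continuousOn (continuous_iff_continuousAt.2 fun x =>
      (hG x).differentiableAt.continuousAt)
  have hdiff : DifferentiableOn ℝ G (interior (Icc a b)) :=
    fun x _ => (hG x).differentiableAt.differentiableWithinAt
  have hge : ∀ x ∈ interior (Icc a b), c4 ≤ deriv G x := by
    intro x hx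
    rw [(hG x).deriv]
    exact hlow x (interior_subset hx)
  have key := (convex_Icc a b).mul_sub_le_image_sub_of_le_deriv hcont hdiff hge
  rw [abs_sub_le_iff]
  have hK : 0 ≤ K := le_trans (abs_nonneg _) h1
  constructor
  · rcases le_total θ θ0 with h | h
    · have : θ - θ0 ≤ 0 := by linarith
      calc θ - θ0 ≤ 0 := this
        _ ≤ 2 * K / c4 := by positivity
    · have := key θ0 hθ0 θ hθ h
      have habs : G θ - G θ0 ≤ 2 * K := by
        have := abs_le.1 h1; have := abs_le.1 h0; linarith
      rw [le_div_iff₀ hc4]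
      nlinarith
  · rcases le_total θ0 θ with h | h
    · have : θ0 - θ ≤ 0 := by linarith
      calc θ0 - θ ≤ 0 := this
        _ ≤ 2 * K / c4 := by positivity
    · have := key θ hθ θ0 hθ0 h
      have habs : G θ0 - G θ ≤ 2 * K := by
        have := abs_le.1 h1; have := abs_le.1 h0; linarith
      rw [le_div_iff₀ hc4]
      nlinarith

/-- Covering `[0,1]` by `N` intervals of length `1/N`. -/
lemma cover_Icc {N : ℕ} (hN : 0 < N) :
    Icc (0:ℝ) 1 ⊆ ⋃ j ∈ Finset.range N, Icc ((j:ℝ)/N) (((j:ℝ)+1)/N) := by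
  intro θ hθ
  have hNR : (0:ℝ) < N := by exact_mod_cast hN
  by_cases hbig : N ≤ ⌊θ * N⌋₊
  · -- θ = 1
    have h1 : (N:ℝ) ≤ θ * N := le_trans (by exact_mod_cast hbig) (Nat.floor_le (by nlinarith [hθ.1]))
    have hθ1 : θ = 1 := le_antisymm hθ.2 (by nlinarith)
    simp only [mem_iUnion, Finset.mem_range]
    refine ⟨N - 1, by omega, ?_⟩
    have hcast : ((N - 1 : ℕ) : ℝ) = (N:ℝ) - 1 := by
      have : (1:ℕ) ≤ N := hN
      push_cast [this]; ring
    constructor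
    · rw [hθ1, hcast]
      rw [div_le_one hNR]; linarith
    · rw [hθ1, hcast]
      rw [le_div_iff₀ hNR]; linarith
  · push_neg at hbig
    simp only [mem_iUnion, Finset.mem_range]
    refine ⟨⌊θ * N⌋₊, hbig, ?_, ?_⟩
    · rw [div_le_iff₀ hNR]
      exact Nat.floor_le (by nlinarith [hθ.1])
    · rw [le_div_iff₀ hNR]
      have := Nat.lt_floor_add_one (θ * N)
      linarith

lemma sublevel {γ : ℝ → E3} (hγ : ContDiff ℝ 2 γ)
    (hsphere : ∀ θ ∈ Icc (0:ℝ) 1, ‖γ θ‖ = 1)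
    (hnondeg : ∀ θ ∈ Icc (0:ℝ) 1, LinearIndependent ℝ ![γ θ, deriv γ θ, deriv (deriv γ) θ])
    {M : ℝ} (hM : IsGreatest ((fun θ => ‖deriv γ θ‖) '' Icc (0:ℝ) 1) M) :
    ∃ A : ℝ, 0 < A ∧ ∀ u : E3, ‖u‖ = 1 → ∀ ε : ℝ, 0 < ε →
      volume {θ : ℝ | θ ∈ Icc (0:ℝ) 1 ∧ ‖fmap γ M u θ‖ < ε} ≤ ENNReal.ofReal (A * ε) := by
  have hM2 : ∀ θ ∈ Icc (0:ℝ) 1, ‖deriv γ θ‖ ≤ M := fun θ hθ => hM.2 ⟨θ, hθ, rfl⟩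
  have hMpos : 0 < M :=
    lt_of_lt_of_le (norm_pos_iff.2 (deriv_ne_zero hnondeg (by norm_num : (0:ℝ) ∈ Icc (0:ℝ) 1)))
      (hM2 0 (by norm_num))
  obtain ⟨c, hc0, hc⟩ := exists_c hγ hsphere hnondeg
  -- uniform continuity of γ''
  have hUC := isCompact_Icc.uniformContinuousOn_of_continuous
    (s := Icc (0:ℝ) 1) (continuous_dd_γ hγ).continuousOn
  rw [Metric.uniformContinuousOn_iff] at hUC
  obtain ⟨η, hη0, hη⟩ := hUC (c/4) (by positivity)
  set N : ℕ := ⌈1/η⌉₊ + 1 with hN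
  have hNpos : 0 < N := Nat.succ_pos _
  have hNR : (0:ℝ) < N := by exact_mod_cast hNpos
  have hNη : 1/(N:ℝ) < η := by
    have h1 : (1:ℝ)/η < N := by
      have := Nat.le_ceil (1/η)
      have h2 : ((⌈1/η⌉₊ : ℕ) : ℝ) < N := by exact_mod_cast Nat.lt_succ_self _
      linarith
    rw [div_lt_iff₀ hNR]
    rw [div_lt_iff₀ hη0] at h1
    nlinarith
  refine ⟨(N:ℝ) * (16*M/c) + 4*M/c, by positivity, ?_⟩
  intro u hu ε hε
  set S := {θ : ℝ | θ ∈ Icc (0:ℝ) 1 ∧ ‖fmap γ M u θ‖ < ε} with hS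
  have hAε : 0 < ((N:ℝ) * (16*M/c) + 4*M/c) * ε := by positivity
  by_cases hcase : c/(4*M) < ε
  · -- trivial case
    have h1 : volume S ≤ volume (Icc (0:ℝ) 1) := measure_mono fun θ hθ => hθ.1
    rw [Real.volume_Icc] at h1
    refine h1.trans ?_
    apply ENNReal.ofReal_le_ofReal
    have h2 : (1:ℝ) < 4*M/c * ε := by
      rw [div_mul_eq_mul_div, lt_div_iff₀ hc0]
      rw [div_lt_iff₀ (by positivity : (0:ℝ) < 4*M)] at hcase
      nlinarith
    have h3 : 0 ≤ (N:ℝ) * (16*M/c) * ε := by positivity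
    nlinarith
  · push_neg at hcase
    have hMε : 2*M*ε ≤ c/2 := by
      rw [le_div_iff₀ (by positivity : (0:ℝ) < 4*M)] at hcase
      linarith
    set g : ℝ → ℝ := fun θ => ⟪u, deriv γ θ⟫ with hgdef
    set g' : ℝ → ℝ := fun θ => ⟪u, deriv (deriv γ) θ⟫ with hg'def
    have hg : ∀ θ, HasDerivAt g (g' θ) θ := by
      intro θ
      have := (hasDerivAt_const θ u).inner ℝ (hasDerivAt_deriv_γ hγ θ)
      simpa using this
    -- bounds on S
    have hS1 : ∀ θ ∈ S, |g θ| ≤ M * ε := by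
      rintro θ ⟨hθI, hθf⟩
      have h1 : |fmap γ M u θ 0| ≤ ‖fmap γ M u θ‖ := abs_apply_le_norm _ _
      rw [fmap_zero] at h1
      have h2 : |M⁻¹ * g θ| < ε := lt_of_le_of_lt h1 hθf
      rw [abs_mul, abs_of_pos (by positivity : (0:ℝ) < M⁻¹)] at h2
      calc |g θ| = M * (M⁻¹ * |g θ|) := by field_simp
        _ ≤ M * ε := by nlinarith
    have hS2 : ∀ θ ∈ S, c/2 ≤ |g' θ| := by
      rintro θ ⟨hθI, hθf⟩
      have hb := hc u hu θ hθI
      have h1 : |fmap γ M u θ 1| ≤ ‖fmap γ M u θ‖ := abs_apply_le_norm _ _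
      rw [fmap_one] at h1
      have hnd : (0:ℝ) < ‖deriv γ θ‖ := norm_pos_iff.2 (deriv_ne_zero hnondeg hθI)
      have h2 : |⟪u, cross3 (γ θ) (deriv γ θ)⟫| ≤ M * ε := by
        have h3 : |(‖deriv γ θ‖)⁻¹ * ⟪u, cross3 (γ θ) (deriv γ θ)⟫| < ε :=
          lt_of_le_of_lt h1 hθf
        rw [abs_mul, abs_of_pos (by positivity : (0:ℝ) < (‖deriv γ θ‖)⁻¹)] at h3
        have h4 : |⟪u, cross3 (γ θ) (deriv γ θ)⟫| < ‖deriv γ θ‖ * ε := by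
          rw [inv_mul_lt_iff₀ hnd] at h3
          exact h3
        have h5 : ‖deriv γ θ‖ * ε ≤ M * ε := by nlinarith [hM2 θ hθI]
        linarith
      have h6 : |g θ| ≤ M * ε := hS1 θ ⟨hθI, hθf⟩
      show c/2 ≤ |g' θ|
      have : |⟪u, deriv γ θ⟫| = |g θ| := rfl
      rw [this] at hb
      have : |⟪u, deriv (deriv γ) θ⟫| = |g' θ| := rfl
      rw [this] at hb
      linarith
    -- covering
    have hcover : S ⊆ ⋃ j ∈ Finset.range N, (S ∩ Icc ((j:ℝ)/N) (((j:ℝ)+1)/N)) := by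
      intro θ hθ
      have := cover_Icc hNpos hθ.1
      simp only [mem_iUnion, Finset.mem_range] at this ⊢
      obtain ⟨j, hj, hmem⟩ := this
      exact ⟨j, hj, hθ, hmem⟩
    have hvol : volume S ≤ ∑ j ∈ Finset.range N,
        volume (S ∩ Icc ((j:ℝ)/N) (((j:ℝ)+1)/N)) :=
      (measure_mono hcover).trans (measure_biUnion_finset_le _ _)
    -- per-interval bound
    have hper : ∀ j ∈ Finset.range N,
        volume (S ∩ Icc ((j:ℝ)/N) (((j:ℝ)+1)/N)) ≤ ENNReal.ofReal ((16*M/c) * ε) := by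
      intro j hj
      rcases Set.eq_empty_or_nonempty (S ∩ Icc ((j:ℝ)/N) (((j:ℝ)+1)/N)) with h | ⟨θ0, hθ0⟩
      · rw [h]; simp
      set a := (j:ℝ)/N
      set b := ((j:ℝ)+1)/N
      have hIsub : Icc a b ⊆ Icc (0:ℝ) 1 := by
        apply Icc_subset_Icc
        · positivity
        · rw [div_le_one hNR]
          have : (j:ℝ) + 1 ≤ N := by
            have := Finset.mem_range.1 hj
            exact_mod_cast Nat.succ_le_of_lt this
          linarith
      have hlen : ∀ s ∈ Icc a b, ∀ t ∈ Icc a b, dist s t < η := by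
        intro s hs t ht
        rw [Real.dist_eq]
        have hab : b - a = 1/(N:ℝ) := by
          show ((j:ℝ)+1)/N - (j:ℝ)/N = 1/(N:ℝ)
          field_simp
          ring
        have h1 : |s - t| ≤ b - a := abs_sub_le_iff.2
          ⟨by linarith [hs.2, ht.1], by linarith [ht.2, hs.1]⟩
        rw [hab] at h1
        linarith
      -- derivative bound on the interval
      have hg'θ0 : c/2 ≤ |g' θ0| := hS2 θ0 hθ0.1
      have hclose : ∀ θ ∈ Icc a b, |g' θ - g' θ0| ≤ c/4 := by
        intro θ hθ
        have hd := hη θ (hIsub hθ) θ0 (hIsub hθ0.2) (hlen θ hθ θ0 hθ0.2)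
        have : g' θ - g' θ0 = ⟪u, deriv (deriv γ) θ - deriv (deriv γ) θ0⟫ := by
          rw [inner_sub_right]
        rw [this]
        calc |⟪u, deriv (deriv γ) θ - deriv (deriv γ) θ0⟫|
            ≤ ‖u‖ * ‖deriv (deriv γ) θ - deriv (deriv γ) θ0‖ := abs_real_inner_le_norm _ _
          _ = ‖deriv (deriv γ) θ - deriv (deriv γ) θ0‖ := by rw [hu, one_mul]
          _ = dist (deriv (deriv γ) θ) (deriv (deriv γ) θ0) := (dist_eq_norm _ _).symm
          _ ≤ c/4 := le_of_lt hd
      -- diameter bound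
      have hdiam : ∀ θ ∈ S ∩ Icc a b, |θ - θ0| ≤ 2 * (M*ε) / (c/4) := by
        intro θ hθ
        rcases le_abs'.1 hg'θ0 with hpos | hneg
        · -- g' θ0 ≤ -(c/2) : work with -g
          have hlow : ∀ t ∈ Icc a b, c/4 ≤ -g' t := by
            intro t ht
            have := abs_le.1 (hclose t ht)
            linarith
          refine interval_bound (G := fun t => -g t) (G' := fun t => -g' t)
            (fun t => (hg t).neg) (by positivity) hlow hθ0.2 hθ.2 ?_ ?_
          · rw [abs_neg]; exact hS1 θ hθ.1
          · rw [abs_neg]; exact hS1 θ0 hθ0.1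
        · -- c/2 ≤ g' θ0
          have hlow : ∀ t ∈ Icc a b, c/4 ≤ g' t := by
            intro t ht
            have := abs_le.1 (hclose t ht)
            linarith
          exact interval_bound hg (by positivity) hlow hθ0.2 hθ.2
            (hS1 θ hθ.1) (hS1 θ0 hθ0.1)
      have hsubset : S ∩ Icc a b ⊆
          Icc (θ0 - 2*(M*ε)/(c/4)) (θ0 + 2*(M*ε)/(c/4)) := by
        intro θ hθ
        have := abs_le.1 (hdiam θ hθ)
        constructor <;> linarith [this.1, this.2]
      calc volume (S ∩ Icc a b) ≤ volume (Icc (θ0 - 2*(M*ε)/(c/4)) (θ0 + 2*(M*ε)/(c/4))) :=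
            measure_mono hsubset
        _ = ENNReal.ofReal (θ0 + 2*(M*ε)/(c/4) - (θ0 - 2*(M*ε)/(c/4))) := Real.volume_Icc
        _ = ENNReal.ofReal ((16*M/c) * ε) := by
            congr 1
            field_simp
            ring
    -- sum up
    calc volume S ≤ ∑ j ∈ Finset.range N, volume (S ∩ Icc ((j:ℝ)/N) (((j:ℝ)+1)/N)) := hvol
      _ ≤ ∑ j ∈ Finset.range N, ENNReal.ofReal ((16*M/c) * ε) := Finset.sum_le_sum hper
      _ = N * ENNReal.ofReal ((16*M/c) * ε) := by
          rw [Finset.sum_const, Finset.card_range, nsmul_eq_mul]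
      _ = ENNReal.ofReal ((N:ℝ) * ((16*M/c) * ε)) := by
          rw [ENNReal.ofReal_mul (by positivity : (0:ℝ) ≤ (N:ℝ))]
          congr 1
          exact (ENNReal.ofReal_natCast N).symm
      _ ≤ ENNReal.ofReal (((N:ℝ) * (16*M/c) + 4*M/c) * ε) := by
          apply ENNReal.ofReal_le_ofReal
          have : 0 ≤ 4*M/c * ε := by positivity
          nlinarith

/-- For a non-degenerate C² curve `γ` on `S²`, there is a constant
`C(γ)` such that for all `δ > 0` and all distinct `z, z'` in the ball of radius `1/2`,
`L³(f_z^δ([0,1]) ∩ f_{z'}^δ([0,1])) ≤ C(γ) δ³ / |z − z'|`. -/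
theorem stmt9 (γ : ℝ → EuclideanSpace ℝ (Fin 3))
    (hγ : ContDiff ℝ 2 γ)
    (hsphere : ∀ θ ∈ Icc (0:ℝ) 1, ‖γ θ‖ = 1)
    (hnondeg : ∀ θ ∈ Icc (0:ℝ) 1,
      LinearIndependent ℝ ![γ θ, deriv γ θ, deriv (deriv γ) θ])
    (M : ℝ) (hM : IsGreatest ((fun θ => ‖deriv γ θ‖) '' Icc (0:ℝ) 1) M) :
    ∃ C : ℝ, 0 < C ∧
      ∀ δ : ℝ, 0 < δ →
        ∀ z z' : EuclideanSpace ℝ (Fin 3), ‖z‖ ≤ 1/2 → ‖z'‖ ≤ 1/2 → z ≠ z' →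
          volume (vertNbhd1 (fmap γ M z) δ ∩ vertNbhd1 (fmap γ M z') δ)
            ≤ ENNReal.ofReal (C * δ ^ 3 / ‖z - z'‖) := by
  obtain ⟨A, hA0, hA⟩ := sublevel hγ hsphere hnondeg hM
  set B : ℝ≥0∞ := volume (Metric.ball (0:E2) 1) with hB
  have hBtop : B ≠ ⊤ := measure_ball_lt_top.ne
  set Bt : ℝ := B.toReal with hBt
  have hBt0 : 0 ≤ Bt := ENNReal.toReal_nonneg
  refine ⟨2*A*Bt + 1, by positivity, ?_⟩
  intro δ hδ z z' hz hz' hne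
  set w : E3 := z - z' with hw
  have hw0 : w ≠ 0 := sub_ne_zero.2 hne
  have hnw : (0:ℝ) < ‖w‖ := norm_pos_iff.2 hw0
  set u : E3 := ‖w‖⁻¹ • w with hu
  have hu1 : ‖u‖ = 1 := by
    rw [hu, norm_smul, norm_inv, norm_norm, inv_mul_cancel₀ hnw.ne']
  set ε : ℝ := 2*δ/‖w‖ with hε
  have hε0 : 0 < ε := by positivity
  set S : Set ℝ := {θ : ℝ | θ ∈ Icc (0:ℝ) 1 ∧ ‖fmap γ M u θ‖ < ε} with hSdef
  set T : Set (ℝ × E2) := {p | p.1 ∈ S ∧ p.2 ∈ Metric.ball (fmap γ M z p.1) δ} with hT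
  -- inclusion
  have hsub : vertNbhd1 (fmap γ M z) δ ∩ vertNbhd1 (fmap γ M z') δ ⊆ T := by
    rintro ⟨θ, y⟩ ⟨⟨hI, h1⟩, _, h2⟩
    have h3 : ‖fmap γ M z θ - fmap γ M z' θ‖ < 2*δ := by
      calc ‖fmap γ M z θ - fmap γ M z' θ‖
          ≤ ‖fmap γ M z θ - y‖ + ‖y - fmap γ M z' θ‖ := norm_sub_le_norm_sub_add_norm_sub _ _ _
        _ < 2*δ := by
            have h1' : ‖fmap γ M z θ - y‖ < δ := by rw [norm_sub_rev]; exact h1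
            linarith
    rw [fmap_sub, ← hw] at h3
    have h4 : fmap γ M w θ = ‖w‖ • fmap γ M u θ := by
      rw [hu, ← fmap_smul, smul_inv_smul₀ hnw.ne']
    rw [h4, norm_smul, norm_norm] at h3
    have h5 : ‖fmap γ M u θ‖ < ε := by
      rw [hε, lt_div_iff₀ hnw]
      nlinarith
    refine ⟨⟨hI, h5⟩, ?_⟩
    rw [Metric.mem_ball, dist_eq_norm]
    exact h1
  -- measurability
  have hγc : Continuous γ := hγ.continuous
  have hγ'c : Continuous (deriv γ) := hγ.continuous_deriv (by norm_num)
  have hSmeas : MeasurableSet S := by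
    have h1 : S = Icc (0:ℝ) 1 ∩ (fun θ => ‖fmap γ M u θ‖) ⁻¹' Iio ε := rfl
    rw [h1]
    exact measurableSet_Icc.inter
      (((fmap_measurable γ hγc hγ'c M u).norm) measurableSet_Iio)
  have hTmeas : MeasurableSet T := by
    have h1 : T = (S ×ˢ (univ : Set E2)) ∩
        {p : ℝ × E2 | dist p.2 (fmap γ M z p.1) < δ} := by
      ext ⟨θ, y⟩; simp [hT, Set.mem_prod, Metric.mem_ball]
    rw [h1]
    refine (hSmeas.prod MeasurableSet.univ).inter ?_
    have h2 : Measurable fun p : ℝ × E2 => dist p.2 (fmap γ M z p.1) :=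
      measurable_snd.dist ((fmap_measurable γ hγc hγ'c M z).comp measurable_fst)
    exact measurableSet_lt h2 measurable_const
  -- Fubini
  have hTvol : volume T ≤ (ENNReal.ofReal (δ^2) * B) * volume S := by
    have h1 : (volume : Measure (ℝ × E2)) = (volume : Measure ℝ).prod (volume : Measure E2) :=
      rfl
    rw [h1, Measure.prod_apply hTmeas]
    have h2 : ∀ θ : ℝ, volume (Prod.mk θ ⁻¹' T)
        ≤ S.indicator (fun _ => ENNReal.ofReal (δ^2) * B) θ := by
      intro θ
      by_cases hθS : θ ∈ S
      · have h3 : Prod.mk θ ⁻¹' T ⊆ Metric.ball (fmap γ M z θ) δ := by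
          rintro y ⟨_, hy⟩; exact hy
        rw [Set.indicator_of_mem hθS]
        calc volume (Prod.mk θ ⁻¹' T) ≤ volume (Metric.ball (fmap γ M z θ) δ) :=
              measure_mono h3
          _ = ENNReal.ofReal (δ ^ Module.finrank ℝ E2) * volume (Metric.ball (0:E2) 1) :=
              Measure.addHaar_ball _ _ hδ.le
          _ = ENNReal.ofReal (δ^2) * B := by
              rw [hB, finrank_euclideanSpace_fin]
      · have h3 : Prod.mk θ ⁻¹' T = ∅ := by
          ext y; simp only [Set.mem_preimage, Set.mem_empty_iff_false, iff_false]
          rintro ⟨hy, _⟩; exact hθS hy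
        rw [h3, Set.indicator_of_notMem hθS]
        simp
    calc ∫⁻ θ, volume (Prod.mk θ ⁻¹' T) ≤
        ∫⁻ θ, S.indicator (fun _ => ENNReal.ofReal (δ^2) * B) θ := lintegral_mono h2
      _ ≤ (ENNReal.ofReal (δ^2) * B) * volume S := lintegral_indicator_const_le _ _
  -- conclude
  have hSvol : volume S ≤ ENNReal.ofReal (A * ε) := hA u hu1 ε hε0
  calc volume (vertNbhd1 (fmap γ M z) δ ∩ vertNbhd1 (fmap γ M z') δ)
      ≤ volume T := measure_mono hsub
    _ ≤ (ENNReal.ofReal (δ^2) * B) * volume S := hTvol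
    _ ≤ (ENNReal.ofReal (δ^2) * B) * ENNReal.ofReal (A * ε) := by
        exact mul_le_mul_right hSvol _
    _ = ENNReal.ofReal (δ^2 * Bt * (A * ε)) := by
        rw [ENNReal.ofReal_mul (by positivity : (0:ℝ) ≤ δ^2 * Bt),
          ENNReal.ofReal_mul (by positivity : (0:ℝ) ≤ δ^2)]
        rw [hBt, ENNReal.ofReal_toReal hBtop]
    _ ≤ ENNReal.ofReal ((2*A*Bt + 1) * δ^3 / ‖z - z'‖) := by
        apply ENNReal.ofReal_le_ofReal
        rw [hε, ← hw]
        have key : δ^2*Bt*(A*(2*δ/‖w‖)) = (2*A*Bt)*δ^3/‖w‖ := by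
          field_simp
        rw [key]
        gcongr
        nlinarith [pow_pos hδ 3]
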